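/- Let k ≥ 3 and 0 < ε ≤ (k-1)/2 be integers and let G be a vgr(n, k, 5, k(k-1)²/2 − ε)-graph. Let u be a vertex of G and let v be a vertex at distance exactly 3 from u whose unique neighbor in N_2(u) is v'. Define V_{C'} = (N_2(v) ∩ N(v')) ∖ (N(u) ∪ N_2(u)). Then there is no edge of G joining a vertex of V_{C'} ∪ {v} to a vertex of N_2(u) ∖ {v'}. -/

import Mathlib

open SimpleGraph

/-- The set of vertices at distance exactly 2 from `v` in `G` (denoted `N₂(v)`). -/
def distTwoSet {V : Type*} (G : SimpleGraph V) (v : V) : Set V := {w | G.dist v w = 2}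

/-- The set of edges of `G` with one endpoint in `A` and the other endpoint in `B`,
denoted `E(A, B)`. -/
def edgesBetween {V : Type*} (G : SimpleGraph V) (A B : Set V) : Set (Sym2 V) :=
  {e | e ∈ G.edgeSet ∧ ∃ a ∈ A, ∃ b ∈ B, e = s(a, b)}

/-- Twice the number of cycles of length `g` through the vertex `v`: we count the closed
walks based at `v` that are cycles of length `g`; every (undirected) cycle of length `g`
containing `v` corresponds to exactly two such walks (its two orientations). -/
noncomputable def doubleCycleCountAt {V : Type*} (G : SimpleGraph V) (g : ℕ) (v : V) : ℕ :=
  {p : G.Walk v v | p.IsCycle ∧ p.length = g}.ncard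

/-- `G` is a `vgr(n, k, g, lam)`-graph: a `k`-regular graph of girth `g` on `n` vertices
in which every vertex lies on exactly `lam` cycles of length `g` (equivalently, the number
of closed cycle-walks of length `g` based at each vertex is `2 * lam`). -/
def IsVGR {V : Type*} [Fintype V] (G : SimpleGraph V) [DecidableRel G.Adj]
    (n k g lam : ℕ) : Prop :=
  Fintype.card V = n ∧ (∀ v : V, G.degree v = k) ∧ G.girth = (g : ℕ∞) ∧
    ∀ v : V, doubleCycleCountAt G g v = 2 * lam


section Helpers

variable {V : Type*} {G : SimpleGraph V} {a b c d e : V}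


lemma my_dist_le_two (h1 : G.Adj a b) (h2 : G.Adj b c) : G.dist a c ≤ 2 := by
  simpa using SimpleGraph.dist_le (Walk.cons h1 (Walk.cons h2 Walk.nil))

lemma my_dist_le_three (h1 : G.Adj a b) (h2 : G.Adj b c) (h3 : G.Adj c d) :
    G.dist a d ≤ 3 := by
  simpa using SimpleGraph.dist_le (Walk.cons h1 (Walk.cons h2 (Walk.cons h3 Walk.nil)))

lemma my_reach_two (h1 : G.Adj a b) (h2 : G.Adj b c) : G.Reachable a c :=
  ⟨Walk.cons h1 (Walk.cons h2 Walk.nil)⟩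

lemma my_dist_eq_two (hne : a ≠ c) (hnadj : ¬ G.Adj a c)
    (h1 : G.Adj a b) (h2 : G.Adj b c) : G.dist a c = 2 := by
  have hle := my_dist_le_two h1 h2
  have h0 : G.dist a c ≠ 0 :=
    SimpleGraph.dist_ne_zero_iff_ne_and_reachable.mpr ⟨hne, my_reach_two h1 h2⟩
  have h1' : G.dist a c ≠ 1 := fun h => hnadj (SimpleGraph.dist_eq_one_iff_adj.mp h)
  omega

lemma my_exists_mid (h : G.dist a c = 2) : ∃ s, G.Adj a s ∧ G.Adj s c := by
  have hr : G.Reachable a c :=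
    (SimpleGraph.dist_ne_zero_iff_ne_and_reachable.mp (by omega)).2
  obtain ⟨p, hp⟩ := hr.exists_walk_length_eq_dist
  rw [h] at hp
  cases p with
  | nil => simp at hp
  | cons h1 q =>
    cases q with
    | nil => simp at hp
    | cons h2 r =>
      cases r with
      | nil => exact ⟨_, h1, h2⟩
      | cons h3 s => simp [Walk.length_cons] at hp


lemma my_cycles_ge (hg : (G.girth : ℕ∞) = (5 : ℕ∞)) :
    ∀ (a : V) (w : G.Walk a a), w.IsCycle → 5 ≤ w.length := by
  have hg' : G.girth = 5 := by exact_mod_cast hg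
  have het : G.egirth = (5 : ℕ∞) := by
    have := SimpleGraph.girth_eq_zero (G := G)
    rcases eq_or_ne G.egirth ⊤ with h | h
    · exfalso
      have : G.girth = 0 := by simp [SimpleGraph.girth, h]
      omega
    · have : G.egirth.toNat = 5 := hg'
      exact (ENat.toNat_eq_iff (by norm_num)).mp this
  intro x w hw
  have h5 : (5 : ℕ∞) ≤ (w.length : ℕ∞) :=
    SimpleGraph.le_egirth.mp (le_of_eq het.symm) x w hw
  exact_mod_cast h5


lemma my_noTri (hg : ∀ (x : V) (w : G.Walk x x), w.IsCycle → 5 ≤ w.length)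
    (h1 : G.Adj a b) (h2 : G.Adj b c) (h3 : G.Adj a c) : False := by
  have n1 := G.ne_of_adj h1
  have n2 := G.ne_of_adj h2
  have n3 := G.ne_of_adj h3
  have hcyc : (Walk.cons h1 (Walk.cons h2 (Walk.cons h3.symm Walk.nil))).IsCycle := by
    rw [Walk.isCycle_def, Walk.isTrail_def]
    refine ⟨?_, by simp, ?_⟩
    · simp only [Walk.edges_cons, Walk.edges_nil, List.nodup_cons, List.mem_cons,
        List.not_mem_nil, or_false, List.mem_singleton, List.nodup_nil, and_true, Sym2.eq_iff]
      aesop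
    · simp only [Walk.support_cons, Walk.support_nil, List.tail_cons, List.nodup_cons,
        List.mem_cons, List.not_mem_nil, or_false, List.mem_singleton, List.nodup_nil, and_true]
      aesop
  have := hg a _ hcyc
  simp [Walk.length_cons] at this

lemma my_noQuad (hg : ∀ (x : V) (w : G.Walk x x), w.IsCycle → 5 ≤ w.length)
    (h1 : G.Adj a b) (h2 : G.Adj b c) (h3 : G.Adj c d) (h4 : G.Adj a d)
    (hac : a ≠ c) (hbd : b ≠ d) : False := by
  have n1 := G.ne_of_adj h1
  have n2 := G.ne_of_adj h2
  have n3 := G.ne_of_adj h3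
  have n4 := G.ne_of_adj h4
  have hcyc :
      (Walk.cons h1 (Walk.cons h2 (Walk.cons h3 (Walk.cons h4.symm Walk.nil)))).IsCycle := by
    rw [Walk.isCycle_def, Walk.isTrail_def]
    refine ⟨?_, by simp, ?_⟩
    · simp only [Walk.edges_cons, Walk.edges_nil, List.nodup_cons, List.mem_cons,
        List.not_mem_nil, or_false, List.mem_singleton, List.nodup_nil, and_true, Sym2.eq_iff]
      aesop
    · simp only [Walk.support_cons, Walk.support_nil, List.tail_cons, List.nodup_cons,
        List.mem_cons, List.not_mem_nil, or_false, List.mem_singleton, List.nodup_nil, and_true]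
      aesop
  have := hg a _ hcyc
  simp [Walk.length_cons] at this

lemma my_uniq_mid (hg : ∀ (x : V) (w : G.Walk x x), w.IsCycle → 5 ≤ w.length)
    {b' : V} (hne : a ≠ c) (h1 : G.Adj a b) (h2 : G.Adj b c)
    (h1' : G.Adj a b') (h2' : G.Adj b' c) : b = b' := by
  by_contra hbb
  exact my_noQuad hg h1 h2 h2'.symm h1' hne hbb

lemma my_walk5 (p : G.Walk a a) (h5 : p.length = 5) :
    ∃ (b c d e : V) (h1 : G.Adj a b) (h2 : G.Adj b c) (h3 : G.Adj c d)
      (h4 : G.Adj d e) (h5' : G.Adj e a),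
      p = Walk.cons h1 (Walk.cons h2 (Walk.cons h3 (Walk.cons h4 (Walk.cons h5' Walk.nil)))) := by
  cases p with
  | nil => simp at h5
  | cons ha1 q1 =>
    cases q1 with
    | nil => simp at h5
    | cons ha2 q2 =>
      cases q2 with
      | nil => simp at h5
      | cons ha3 q3 =>
        cases q3 with
        | nil => simp at h5
        | cons ha4 q4 =>
          cases q4 with
          | nil => simp at h5
          | cons ha5 q5 =>
            cases q5 with
            | nil => exact ⟨_, _, _, _, ha1, ha2, ha3, ha4, ha5, rfl⟩
            | cons ha6 q6 => simp [Walk.length_cons] at h5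

lemma budget_ncard_le {V : Type*} [Fintype V] (G : SimpleGraph V) [DecidableRel G.Adj]
    (k εε lam : ℕ) (a : V)
    (hreg : ∀ z : V, G.degree z = k)
    (hg : ∀ (x : V) (w : G.Walk x x), w.IsCycle → 5 ≤ w.length)
    (hcount : doubleCycleCountAt G 5 a = 2 * lam)
    (h2lam : 2 * lam + 2 * εε = k * (k - 1) * (k - 1))
    (hk : 3 ≤ k) :
    {zy : V × V | G.dist a zy.1 = 2 ∧ G.Adj zy.1 zy.2 ∧ G.dist a zy.2 = 3}.ncard ≤ 2 * εε := by
  classical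
  have hane : ∀ z : V, G.dist a z = 2 → a ≠ z := by
    intro z hz h
    rw [← h, SimpleGraph.dist_self] at hz
    omega
  -- the finset of vertices at distance two
  set N2 : Finset V := Finset.univ.filter (fun z => G.dist a z = 2) with hN2def
  have hmemN2 : ∀ z : V, z ∈ N2 ↔ G.dist a z = 2 := by
    intro z; simp [hN2def]
  have hN2card : N2.card = k * (k - 1) := by
    have hEq : N2 = (G.neighborFinset a).biUnion (fun b => (G.neighborFinset b).erase a) := by
      ext z
      rw [hmemN2]
      simp only [Finset.mem_biUnion, SimpleGraph.mem_neighborFinset, Finset.mem_erase]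
      constructor
      · intro hz
        obtain ⟨s, hs1, hs2⟩ := my_exists_mid hz
        exact ⟨s, hs1, (hane z hz).symm, hs2⟩
      · rintro ⟨b, hab, hza, hbz⟩
        have hnadj : ¬ G.Adj a z := fun h => my_noTri hg hab hbz h
        exact my_dist_eq_two (Ne.symm hza) hnadj hab hbz
    rw [hEq, Finset.card_biUnion]
    · have : ∀ b ∈ G.neighborFinset a, ((G.neighborFinset b).erase a).card = k - 1 := by
        intro b hb
        rw [SimpleGraph.mem_neighborFinset] at hb
        rw [Finset.card_erase_of_mem (by rw [SimpleGraph.mem_neighborFinset]; exact hb.symm)]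
        rw [SimpleGraph.card_neighborFinset_eq_degree, hreg]
      rw [Finset.sum_congr rfl this, Finset.sum_const, SimpleGraph.card_neighborFinset_eq_degree,
        hreg, smul_eq_mul]
    · intro b hb b' hb' hbb'
      rw [Finset.mem_coe, SimpleGraph.mem_neighborFinset] at hb hb'
      simp only [Finset.disjoint_left, Finset.mem_erase, SimpleGraph.mem_neighborFinset]
      rintro z ⟨hza, hbz⟩ ⟨_, hb'z⟩
      exact hbb' (my_uniq_mid hg (Ne.symm hza) hb hbz hb' hb'z)
  -- the finset of pairs (z, y) with z at distance 2 and y adjacent to z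
  set T : Finset (V × V) :=
      N2.biUnion (fun z => (G.neighborFinset z).image (fun y => (z, y))) with hTdef
  have hmemT : ∀ zy : V × V, zy ∈ T ↔ G.dist a zy.1 = 2 ∧ G.Adj zy.1 zy.2 := by
    rintro ⟨z, y⟩
    simp only [hTdef, Finset.mem_biUnion, Finset.mem_image, SimpleGraph.mem_neighborFinset]
    constructor
    · rintro ⟨z', hz', y', hy', h⟩
      cases h
      exact ⟨(hmemN2 _).mp hz', hy'⟩
    · rintro ⟨h1, h2⟩
      exact ⟨z, (hmemN2 z).mpr h1, y, h2, rfl⟩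
  have hTcard : T.card = k * (k - 1) * k := by
    rw [hTdef, Finset.card_biUnion]
    · have : ∀ z ∈ N2, ((G.neighborFinset z).image (fun y => (z, y))).card = k := by
        intro z _
        rw [Finset.card_image_of_injective _ (fun y y' h => (Prod.mk.injEq .. ▸ h).2),
          SimpleGraph.card_neighborFinset_eq_degree, hreg]
      rw [Finset.sum_congr rfl this, Finset.sum_const, smul_eq_mul, hN2card]
    · intro z hz z' hz' hzz'
      simp only [Finset.disjoint_left, Finset.mem_image]
      rintro ⟨w1, w2⟩ ⟨y, hy, h⟩ ⟨y', hy', h'⟩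
      apply hzz'
      cases h; cases h'; rfl
  -- coverage of second coordinate distances
  have hcover : ∀ zy : V × V, zy ∈ T →
      G.dist a zy.2 = 1 ∨ G.dist a zy.2 = 2 ∨ G.dist a zy.2 = 3 := by
    rintro ⟨z, y⟩ hm
    obtain ⟨h1, h2⟩ := (hmemT _).mp hm
    obtain ⟨s, hs1, hs2⟩ := my_exists_mid h1
    have hle : G.dist a y ≤ 3 := my_dist_le_three hs1 hs2 h2
    have hne0 : G.dist a y ≠ 0 := by
      rw [SimpleGraph.dist_ne_zero_iff_ne_and_reachable]
      constructor
      · rintro rfl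
        rw [SimpleGraph.dist_eq_one_iff_adj.mpr h2.symm] at h1
        omega
      · exact ⟨Walk.cons hs1 (Walk.cons hs2 (Walk.cons h2 Walk.nil))⟩
    dsimp only
    omega
  set T1 : Finset (V × V) := T.filter (fun zy => G.dist a zy.2 = 1) with hT1def
  set T2 : Finset (V × V) := T.filter (fun zy => G.dist a zy.2 = 2) with hT2def
  set T3 : Finset (V × V) := T.filter (fun zy => G.dist a zy.2 = 3) with hT3def
  have hsplit : T.card = T1.card + T2.card + T3.card := by
    have hU : T1 ∪ T2 ∪ T3 = T := by
      ext zy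
      simp only [hT1def, hT2def, hT3def, Finset.mem_union, Finset.mem_filter]
      constructor
      · rintro ((⟨h, _⟩ | ⟨h, _⟩) | ⟨h, _⟩) <;> exact h
      · intro h
        rcases hcover zy h with h' | h' | h' <;> tauto
    have d12 : Disjoint T1 T2 := by
      simp only [hT1def, hT2def, Finset.disjoint_left, Finset.mem_filter]
      rintro zy ⟨_, h⟩ ⟨_, h'⟩; omega
    have d123 : Disjoint (T1 ∪ T2) T3 := by
      simp only [hT1def, hT2def, hT3def, Finset.disjoint_left, Finset.mem_union,
        Finset.mem_filter]
      rintro zy (⟨_, h⟩ | ⟨_, h⟩) ⟨_, h'⟩ <;> omega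
    rw [← hU, Finset.card_union_of_disjoint d123, Finset.card_union_of_disjoint d12]
  have hT1card : T1.card = k * (k - 1) := by
    rw [← hN2card]
    apply Finset.card_bij (fun zy _ => zy.1)
    · rintro ⟨z, y⟩ hm
      rw [hT1def, Finset.mem_filter] at hm
      exact (hmemN2 z).mpr ((hmemT _).mp hm.1).1
    · rintro ⟨z, y⟩ hm ⟨z', y'⟩ hm' h
      rw [hT1def, Finset.mem_filter] at hm hm'
      obtain ⟨hmT, hy1⟩ := hm
      obtain ⟨hmT', hy1'⟩ := hm'
      obtain ⟨hz2, hzy⟩ := (hmemT _).mp hmT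
      obtain ⟨hz2', hzy'⟩ := (hmemT _).mp hmT'
      dsimp only at h
      subst h
      have : y = y' := my_uniq_mid hg (hane z hz2)
        (SimpleGraph.dist_eq_one_iff_adj.mp hy1) hzy.symm
        (SimpleGraph.dist_eq_one_iff_adj.mp hy1') hzy'.symm
      rw [this]
    · intro z hz
      obtain ⟨s, hs1, hs2⟩ := my_exists_mid ((hmemN2 z).mp hz)
      refine ⟨(z, s), ?_, rfl⟩
      rw [hT1def, Finset.mem_filter]
      exact ⟨(hmemT _).mpr ⟨(hmemN2 z).mp hz, hs2.symm⟩, SimpleGraph.dist_eq_one_iff_adj.mpr hs1⟩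
  have hT2card : 2 * lam ≤ T2.card := by
    rw [← hcount, doubleCycleCountAt, ← Set.ncard_coe_finset]
    apply Set.ncard_le_ncard_of_injOn (fun p => (p.getVert 2, p.getVert 3))
    · rintro p ⟨hcyc, hlen⟩
      obtain ⟨b, c, d, e, h1, h2, h3, h4, h5', rfl⟩ := my_walk5 p hlen
      have hnd := (Walk.isCycle_def _).mp hcyc |>.2.2
      simp only [Walk.support_cons, Walk.support_nil, List.tail_cons, List.nodup_cons,
        List.mem_cons, List.mem_singleton, List.not_mem_nil, or_false, List.nodup_nil,
        and_true, not_or] at hnd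
      have hac : a ≠ c := fun h => hnd.2.1.2.2 h.symm
      have had : a ≠ d := fun h => hnd.2.2.1.2 h.symm
      have hgv2 : (Walk.cons h1 (Walk.cons h2 (Walk.cons h3 (Walk.cons h4
          (Walk.cons h5' Walk.nil))))).getVert 2 = c := by
        simp [Walk.getVert_cons_succ, Walk.getVert_zero]
      have hgv3 : (Walk.cons h1 (Walk.cons h2 (Walk.cons h3 (Walk.cons h4
          (Walk.cons h5' Walk.nil))))).getVert 3 = d := by
        simp [Walk.getVert_cons_succ, Walk.getVert_zero]
      rw [hgv2, hgv3, Finset.mem_coe, hT2def, Finset.mem_filter]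
      refine ⟨(hmemT (c, d)).mpr ⟨?_, h3⟩, ?_⟩
      · exact my_dist_eq_two hac (fun h => my_noTri hg h1 h2 h) h1 h2
      · exact my_dist_eq_two had (fun h => my_noTri hg h5'.symm h4.symm h) h5'.symm h4.symm
    · rintro p ⟨hcycp, hlenp⟩ q ⟨hcycq, hlenq⟩ hpq
      obtain ⟨b, c, d, e, h1, h2, h3, h4, h5', rfl⟩ := my_walk5 p hlenp
      obtain ⟨b', c', d', e', g1, g2, g3, g4, g5', rfl⟩ := my_walk5 q hlenq
      have hnd := (Walk.isCycle_def _).mp hcycp |>.2.2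
      simp only [Walk.support_cons, Walk.support_nil, List.tail_cons, List.nodup_cons,
        List.mem_cons, List.mem_singleton, List.not_mem_nil, or_false, List.nodup_nil,
        and_true, not_or] at hnd
      have hac : a ≠ c := fun h => hnd.2.1.2.2 h.symm
      have had : a ≠ d := fun h => hnd.2.2.1.2 h.symm
      simp only [Prod.mk.injEq, Walk.getVert_cons_succ, Walk.getVert_zero] at hpq
      obtain ⟨rfl, rfl⟩ : c = c' ∧ d = d' := hpq
      have hb : b = b' := my_uniq_mid hg hac h1 h2 g1 g2
      have he : e = e' := my_uniq_mid hg had.symm h4 h5' g4 g5'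
      subst hb
      subst he
      rfl
  -- final arithmetic
  have hT3T : ↑T3 = {zy : V × V | G.dist a zy.1 = 2 ∧ G.Adj zy.1 zy.2 ∧ G.dist a zy.2 = 3} := by
    ext zy
    simp only [hT3def, Finset.coe_filter, Set.mem_setOf_eq, hmemT]
    tauto
  rw [← hT3T, Set.ncard_coe_finset]
  have hkey : k * (k - 1) * k = k * (k - 1) + k * (k - 1) * (k - 1) := by
    obtain ⟨m, rfl⟩ : ∃ m, k = m + 1 := ⟨k - 1, by omega⟩
    simp only [Nat.add_sub_cancel]
    ring
  have e1 : T1.card + T2.card + T3.card = k * (k - 1) + k * (k - 1) * (k - 1) := by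
    rw [← hkey, ← hTcard, hsplit]
  rw [hT1card] at e1
  have e2 : T2.card + T3.card = k * (k - 1) * (k - 1) := by omega
  omega

end Helpers

/-- Let `G` be a `vgr(n, k, 5, k(k-1)²/2 − ε)`-graph with `k ≥ 3` and
`0 < ε ≤ (k-1)/2`, let `u` be a vertex, let `v` be at distance exactly `3` from `u` with
unique neighbor `v'` in `N₂(u)`, and set `V_{C'} = (N₂(v) ∩ N(v')) ∖ (N(u) ∪ N₂(u))`.
Then no edge of `G` joins a vertex of `V_{C'} ∪ {v}` to a vertex of `N₂(u) ∖ {v'}`. -/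
theorem vgr_no_edge_VCprime {V : Type*} [Fintype V] (G : SimpleGraph V) [DecidableRel G.Adj]
    (k ε n : ℕ) (hk : 3 ≤ k) (hε : 0 < ε) (hεk : 2 * ε ≤ k - 1)
    (hG : IsVGR G n k 5 (k * (k - 1) ^ 2 / 2 - ε)) (u v v' : V)
    (hdist : G.dist u v = 3)
    (hv' : G.neighborSet v ∩ distTwoSet G u = {v'}) :
    ∀ w ∈ ((distTwoSet G v ∩ G.neighborSet v') \ (G.neighborSet u ∪ distTwoSet G u)) ∪ {v},
      ∀ x ∈ distTwoSet G u \ {v'}, ¬ G.Adj w x := by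
  classical
  obtain ⟨-, hreg, hgirth, hcyccount⟩ := hG
  have hg := my_cycles_ge hgirth
  -- facts about v'
  have hv'mem : v' ∈ G.neighborSet v ∩ distTwoSet G u := by rw [hv']; rfl
  have hadj_vv' : G.Adj v v' := hv'mem.1
  have hdist_uv' : G.dist u v' = 2 := hv'mem.2
  have huniq : ∀ s : V, G.Adj v s → G.dist u s = 2 → s = v' := by
    intro s h1 h2
    have : s ∈ G.neighborSet v ∩ distTwoSet G u := ⟨h1, h2⟩
    rwa [hv'] at this
  have hne_uv' : u ≠ v' := by rintro rfl; rw [SimpleGraph.dist_self] at hdist_uv'; omega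
  have hnadj_uv' : ¬ G.Adj u v' := fun h => by
    rw [SimpleGraph.dist_eq_one_iff_adj.mpr h] at hdist_uv'; omega
  have hnadj_uv : ¬ G.Adj u v := fun h => by
    rw [SimpleGraph.dist_eq_one_iff_adj.mpr h] at hdist; omega
  have hne_uv : u ≠ v := fun h => by rw [← h, SimpleGraph.dist_self] at hdist; omega
  -- the parent p of v'
  obtain ⟨p, hup, hpv'⟩ := my_exists_mid hdist_uv'
  have hpuniq : ∀ y : V, G.Adj u y → G.Adj y v' → y = p := fun y h1 h2 =>
    my_uniq_mid hg hne_uv' h1 h2 hup hpv'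
  have hne_pv : p ≠ v := fun h => hnadj_uv (h ▸ hup)
  have hnadj_vp : ¬ G.Adj v p := fun h => by
    have := my_dist_le_two hup h.symm
    omega
  have hdist_vp : G.dist v p = 2 := my_dist_eq_two (Ne.symm hne_pv) (fun h => hnadj_vp h)
    hadj_vv' hpv'.symm
  -- the 2ε bounds
  have h2lam : 2 * (k * (k - 1) ^ 2 / 2 - ε) + 2 * ε = k * (k - 1) * (k - 1) := by
    have heven : Even (k * (k - 1) ^ 2) := by
      have h1 : Even ((k - 1) * k) := by
        have := Nat.even_mul_succ_self (k - 1)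
        have hsk : k - 1 + 1 = k := by omega
        rwa [hsk] at this
      have h2 : k * (k - 1) ^ 2 = ((k - 1) * k) * (k - 1) := by ring
      rw [h2]
      exact h1.mul_right _
    obtain ⟨m, hm⟩ := heven
    have hle : k - 1 ≤ k * (k - 1) ^ 2 := by
      have h1k : 1 ≤ k * (k - 1) := Nat.mul_pos (by omega) (by omega)
      calc k - 1 = 1 * (k - 1) := (one_mul _).symm
        _ ≤ (k * (k - 1)) * (k - 1) := Nat.mul_le_mul_right _ h1k
        _ = k * (k - 1) ^ 2 := by ring
    have hkk : k * (k - 1) * (k - 1) = k * (k - 1) ^ 2 := by ring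
    rw [hkk, hm] at *
    omega
  have hbud_u := budget_ncard_le G k ε _ u hreg hg (hcyccount u) h2lam hk
  have hbud_v := budget_ncard_le G k ε _ v hreg hg (hcyccount v) h2lam hk
  -- now the main argument
  intro w hw x hx hadj
  obtain ⟨hx2, hxne⟩ : G.dist u x = 2 ∧ ¬ x = v' := hx
  rcases hw with hwmain | hwv
  swap
  · -- w = v : immediate from uniqueness of v'
    have hwv' : w = v := hwv
    subst hwv'
    exact hxne (huniq x hadj hx2)
  obtain ⟨⟨hwv2, hwadj'⟩, hwnot⟩ := hwmain
  have hwadj : G.Adj v' w := hwadj'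
  have hwnadj : ¬ G.Adj u w := fun h => hwnot (Or.inl h)
  have hwn2 : ¬ G.dist u w = 2 := fun h => hwnot (Or.inr h)
  have hne_uw : u ≠ w := by
    rintro rfl
    exact hnadj_uv' hwadj.symm
  have hw3 : G.dist u w = 3 := by
    have hle := my_dist_le_three hup hpv' hwadj
    have h0 : G.dist u w ≠ 0 := SimpleGraph.dist_ne_zero_iff_ne_and_reachable.mpr
      ⟨hne_uw, ⟨Walk.cons hup (Walk.cons hpv' (Walk.cons hwadj Walk.nil))⟩⟩
    have h1 : G.dist u w ≠ 1 := fun h => hwnadj (SimpleGraph.dist_eq_one_iff_adj.mp h)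
    omega
  have hnadj_vw : ¬ G.Adj v w := fun h => my_noTri hg hadj_vv' hwadj h
  -- choice functions for midpoints
  set yfun : V → V := fun t => if h : ∃ s, G.Adj u s ∧ G.Adj s t then h.choose else u with hyfun
  have hyspec : ∀ t : V, G.dist u t = 2 → G.Adj u (yfun t) ∧ G.Adj (yfun t) t := by
    intro t ht
    have h := my_exists_mid ht
    rw [hyfun]
    simp only [dif_pos h]
    exact h.choose_spec
  set zfun : V → V := fun q => if h : ∃ s, G.Adj v s ∧ G.Adj s q then h.choose else v with hzfun
  have hzspec : ∀ q : V, G.dist v q = 2 → G.Adj v (zfun q) ∧ G.Adj (zfun q) q := by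
    intro q hq
    have h := my_exists_mid hq
    rw [hzfun]
    simp only [dif_pos h]
    exact h.choose_spec
  -- the two index sets
  set Fv' : Finset V := G.neighborFinset v' \ {v, p} with hFv'
  set Fp : Finset V := G.neighborFinset p \ {u, v'} with hFp
  have hFv'card : Fv'.card = k - 2 := by
    rw [hFv', Finset.card_sdiff_of_subset]
    · rw [SimpleGraph.card_neighborFinset_eq_degree, hreg, Finset.card_insert_of_notMem
        (by simp [hne_pv.symm]), Finset.card_singleton]
    · intro z hz
      simp only [Finset.mem_insert, Finset.mem_singleton] at hz
      rcases hz with rfl | rfl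
      · simpa using hadj_vv'.symm
      · simpa using hpv'.symm
  have hFpcard : Fp.card = k - 2 := by
    rw [hFp, Finset.card_sdiff_of_subset]
    · rw [SimpleGraph.card_neighborFinset_eq_degree, hreg, Finset.card_insert_of_notMem
        (by simp [hne_uv']), Finset.card_singleton]
    · intro z hz
      simp only [Finset.mem_insert, Finset.mem_singleton] at hz
      rcases hz with rfl | rfl
      · simpa using hup.symm
      · simpa using hpv'
  have hmemFv' : ∀ t : V, t ∈ Fv' ↔ G.Adj v' t ∧ t ≠ v ∧ t ≠ p := by
    intro t
    rw [hFv']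
    simp only [Finset.mem_sdiff, SimpleGraph.mem_neighborFinset, Finset.mem_insert,
      Finset.mem_singleton, not_or]
  have hmemFp : ∀ q : V, q ∈ Fp ↔ G.Adj p q ∧ q ≠ u ∧ q ≠ v' := by
    intro q
    rw [hFp]
    simp only [Finset.mem_sdiff, SimpleGraph.mem_neighborFinset, Finset.mem_insert,
      Finset.mem_singleton, not_or]
  -- dichotomy for members of Fv'
  have hFv'dich : ∀ t ∈ Fv', G.dist u t = 2 ∨ G.dist u t = 3 := by
    intro t ht
    obtain ⟨ht1, ht2, ht3⟩ := (hmemFv' t).mp ht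
    have hle := my_dist_le_three hup hpv' ht1
    have h0 : G.dist u t ≠ 0 := SimpleGraph.dist_ne_zero_iff_ne_and_reachable.mpr
      ⟨fun h => hnadj_uv' (h ▸ ht1).symm,
        ⟨Walk.cons hup (Walk.cons hpv' (Walk.cons ht1 Walk.nil))⟩⟩
    have h1 : G.dist u t ≠ 1 := fun h =>
      ht3 (hpuniq t (SimpleGraph.dist_eq_one_iff_adj.mp h) ht1.symm)
    omega
  -- dichotomy for members of Fp
  have hFpdist2 : ∀ q ∈ Fp, G.dist u q = 2 := by
    intro q hq
    obtain ⟨hq1, hq2, hq3⟩ := (hmemFp q).mp hq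
    exact my_dist_eq_two (Ne.symm hq2) (fun h => my_noTri hg hup hq1 h) hup hq1
  have hFpdich : ∀ q ∈ Fp, G.dist v q = 2 ∨ G.dist v q = 3 := by
    intro q hq
    obtain ⟨hq1, hq2, hq3⟩ := (hmemFp q).mp hq
    have hle := my_dist_le_three hadj_vv' hpv'.symm hq1
    have h0 : G.dist v q ≠ 0 := SimpleGraph.dist_ne_zero_iff_ne_and_reachable.mpr
      ⟨fun h => by have h2 := hFpdist2 q hq; rw [← h] at h2; omega,
        ⟨Walk.cons hadj_vv' (Walk.cons hpv'.symm (Walk.cons hq1 Walk.nil))⟩⟩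
    have h1 : G.dist v q ≠ 1 := fun h =>
      hq3 (huniq q (SimpleGraph.dist_eq_one_iff_adj.mp h) (hFpdist2 q hq))
    omega
  -- the four parts
  set A1 : Finset V := Fv'.filter (fun t => G.dist u t = 3) with hA1
  set A2 : Finset V := Fv'.filter (fun t => ¬ G.dist u t = 3) with hA2
  set B1 : Finset V := Fp.filter (fun q => G.dist v q = 3) with hB1
  set B2 : Finset V := Fp.filter (fun q => ¬ G.dist v q = 3) with hB2
  have hAsum : A1.card + A2.card = k - 2 := by
    rw [hA1, hA2, Finset.card_filter_add_card_filter_not, hFv'card]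
  have hBsum : B1.card + B2.card = k - 2 := by
    rw [hB1, hB2, Finset.card_filter_add_card_filter_not, hFpcard]
  have hA2dist : ∀ t ∈ A2, G.dist u t = 2 := by
    intro t ht
    obtain ⟨htF, ht3⟩ := Finset.mem_filter.mp ht
    rcases hFv'dich t htF with h | h
    · exact h
    · exact absurd h ht3
  have hB2dist : ∀ q ∈ B2, G.dist v q = 2 := by
    intro q hq
    obtain ⟨hqF, hq3⟩ := Finset.mem_filter.mp hq
    rcases hFpdich q hqF with h | h
    · exact h
    · exact absurd h hq3
  -- distance-2 facts relative to v for members of Fv'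
  have hFv'dv : ∀ t ∈ Fv', G.dist v t = 2 := by
    intro t ht
    obtain ⟨ht1, ht2, ht3⟩ := (hmemFv' t).mp ht
    have htv' : t ≠ v' := fun h => G.irrefl (h ▸ ht1)
    have hnadj : ¬ G.Adj v t := by
      intro h
      rcases hFv'dich t ht with h2 | h3
      · exact htv' (huniq t h h2)
      · exact my_noTri hg hadj_vv' ht1 h
    exact my_dist_eq_two (Ne.symm ht2) hnadj hadj_vv' ht1
  -- the key distance-3 facts
  have hyt3 : ∀ t ∈ A2, G.dist v (yfun t) = 3 := by
    intro t ht
    have ht2 := hA2dist t ht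
    obtain ⟨htF, -⟩ := Finset.mem_filter.mp ht
    obtain ⟨ht1, htv, htp⟩ := (hmemFv' t).mp htF
    obtain ⟨hy1, hy2⟩ := hyspec t ht2
    have hle : G.dist v (yfun t) ≤ 3 := my_dist_le_three hadj_vv' ht1 hy2.symm
    have h0 : G.dist v (yfun t) ≠ 0 := SimpleGraph.dist_ne_zero_iff_ne_and_reachable.mpr
      ⟨fun h => hnadj_uv (h ▸ hy1), ⟨Walk.cons hadj_vv' (Walk.cons ht1 (Walk.cons hy2.symm Walk.nil))⟩⟩
    have h1 : G.dist v (yfun t) ≠ 1 := by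
      intro h
      have := my_dist_le_two hy1 (SimpleGraph.dist_eq_one_iff_adj.mp h).symm
      omega
    have h2 : G.dist v (yfun t) ≠ 2 := by
      intro h
      obtain ⟨s, hs1, hs2⟩ := my_exists_mid h
      have hsu2 : G.dist u s = 2 := by
        apply my_dist_eq_two
        · rintro rfl
          exact hnadj_uv hs1.symm
        · intro hus
          have := my_dist_le_two hus hs1.symm
          omega
        · exact hy1
        · exact hs2.symm
      have hsv' : s = v' := huniq s hs1 hsu2
      subst hsv'
      have hyp : yfun t = p := hpuniq _ hy1 hs2.symm
      rw [hyp] at hy2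
      exact my_noTri hg hpv' ht1 hy2
    omega
  have hzq3 : ∀ q ∈ B2, G.dist u (zfun q) = 3 := by
    intro q hq
    have hq2d := hB2dist q hq
    obtain ⟨hqF, -⟩ := Finset.mem_filter.mp hq
    obtain ⟨hq1, hqu, hqv'⟩ := (hmemFp q).mp hqF
    obtain ⟨hz1, hz2⟩ := hzspec q hq2d
    have hle : G.dist u (zfun q) ≤ 3 := my_dist_le_three hup hq1 hz2.symm
    have h0 : G.dist u (zfun q) ≠ 0 := SimpleGraph.dist_ne_zero_iff_ne_and_reachable.mpr
      ⟨fun h => hnadj_uv (h ▸ hz1).symm,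
        ⟨Walk.cons hup (Walk.cons hq1 (Walk.cons hz2.symm Walk.nil))⟩⟩
    have h1 : G.dist u (zfun q) ≠ 1 := by
      intro h
      have := my_dist_le_two (SimpleGraph.dist_eq_one_iff_adj.mp h) hz1.symm
      omega
    have h2 : G.dist u (zfun q) ≠ 2 := by
      intro h
      have : zfun q = v' := huniq _ hz1 h
      rw [this] at hz2
      exact my_noTri hg hpv' hz2 hq1
    omega
  -- facts about x
  have hnadj_vx : ¬ G.Adj v x := fun h => hxne (huniq x h hx2)
  have hne_vx : v ≠ x := by
    rintro rfl
    omega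
  have hne_ux : u ≠ x := by
    rintro rfl
    rw [SimpleGraph.dist_self] at hx2
    omega
  have hxdich : G.dist v x = 2 ∨ G.dist v x = 3 := by
    obtain ⟨s0, hs0v, hs0w⟩ := my_exists_mid hwv2
    have hle : G.dist v x ≤ 3 := my_dist_le_three hs0v hs0w hadj
    have h0 : G.dist v x ≠ 0 := SimpleGraph.dist_ne_zero_iff_ne_and_reachable.mpr
      ⟨hne_vx, ⟨Walk.cons hs0v (Walk.cons hs0w (Walk.cons hadj Walk.nil))⟩⟩
    have h1 : G.dist v x ≠ 1 := fun h => hnadj_vx (SimpleGraph.dist_eq_one_iff_adj.mp h)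
    omega
  -- more facts
  have hne_pw : p ≠ w := fun h => hwnadj (h ▸ hup)
  have hne_px : p ≠ x := fun h => by
    have : G.dist u x = 1 := SimpleGraph.dist_eq_one_iff_adj.mpr (h ▸ hup)
    omega
  have hdist_vw : G.dist v w = 2 := hwv2
  -- pick the x-edge pair for the v-side
  obtain ⟨xe, hxeD, hxe1p, hxe1A2⟩ : ∃ xe : V × V,
      (G.dist v xe.1 = 2 ∧ G.Adj xe.1 xe.2 ∧ G.dist v xe.2 = 3) ∧ xe.1 ≠ p ∧ xe.1 ∉ A2 := by
    rcases hxdich with hvx2 | hvx3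
    · -- x at distance 2 from v : use the pair (x, yfun x)
      obtain ⟨hy1, hy2⟩ := hyspec x hx2
      have hyx3 : G.dist v (yfun x) = 3 := by
        obtain ⟨s1, hs1v, hs1x⟩ := my_exists_mid hvx2
        have hle : G.dist v (yfun x) ≤ 3 := my_dist_le_three hs1v hs1x hy2.symm
        have h0 : G.dist v (yfun x) ≠ 0 := SimpleGraph.dist_ne_zero_iff_ne_and_reachable.mpr
          ⟨fun h => hnadj_uv (h ▸ hy1),
            ⟨Walk.cons hs1v (Walk.cons hs1x (Walk.cons hy2.symm Walk.nil))⟩⟩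
        have h1 : G.dist v (yfun x) ≠ 1 := by
          intro h
          have := my_dist_le_two hy1 (SimpleGraph.dist_eq_one_iff_adj.mp h).symm
          omega
        have h2 : G.dist v (yfun x) ≠ 2 := by
          intro h
          obtain ⟨s, hs1, hs2⟩ := my_exists_mid h
          have hsu2 : G.dist u s = 2 := by
            apply my_dist_eq_two
            · rintro rfl
              exact hnadj_uv hs1.symm
            · intro hus
              have := my_dist_le_two hus hs1.symm
              omega
            · exact hy1
            · exact hs2.symm
          have hsv' : s = v' := huniq s hs1 hsu2
          subst hsv'
          have hyp : yfun x = p := hpuniq _ hy1 hs2.symm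
          rw [hyp] at hy2
          exact my_noQuad hg hy2 hadj.symm hwadj.symm hpv' hne_pw hxne
        omega
      refine ⟨(x, yfun x), ⟨hvx2, hy2.symm, hyx3⟩, Ne.symm hne_px, ?_⟩
      intro hxA2
      obtain ⟨hxF, -⟩ := Finset.mem_filter.mp hxA2
      obtain ⟨hx1, -, -⟩ := (hmemFv' x).mp hxF
      exact my_noTri hg hx1 hadj.symm hwadj
    · refine ⟨(w, x), ⟨hdist_vw, hadj, hvx3⟩, Ne.symm hne_pw, ?_⟩
      intro hwA2
      have := hA2dist w hwA2
      omega
  -- the two witness finsets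
  set SuX : Finset (V × V) := A1.image (fun t => (v', t)) with hSuX
  set SuY : Finset (V × V) := B2.image (fun q => (q, zfun q)) with hSuY
  set Su : Finset (V × V) := insert (v', v) (insert (x, w) (SuX ∪ SuY)) with hSu
  set SvX : Finset (V × V) := A2.image (fun t => (t, yfun t)) with hSvX
  set SvY : Finset (V × V) := B1.image (fun q => (p, q)) with hSvY
  set Sv : Finset (V × V) := insert (p, u) (insert xe (SvX ∪ SvY)) with hSv
  -- Su is contained in the u-budget
  have hSuD : (↑Su : Set (V × V)) ⊆
      {zy : V × V | G.dist u zy.1 = 2 ∧ G.Adj zy.1 zy.2 ∧ G.dist u zy.2 = 3} := by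
    intro zy hzy
    rw [hSu] at hzy
    simp only [Finset.coe_insert, Set.mem_insert_iff, Finset.coe_union, Set.mem_union,
      Finset.mem_coe] at hzy
    rcases hzy with rfl | rfl | hzy | hzy
    · exact ⟨hdist_uv', hadj_vv'.symm, hdist⟩
    · exact ⟨hx2, hadj.symm, hw3⟩
    · rw [hSuX] at hzy
      obtain ⟨t, ht, rfl⟩ := Finset.mem_image.mp hzy
      obtain ⟨htF, ht3⟩ := Finset.mem_filter.mp ht
      exact ⟨hdist_uv', ((hmemFv' t).mp htF).1, ht3⟩
    · rw [hSuY] at hzy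
      obtain ⟨q, hq, rfl⟩ := Finset.mem_image.mp hzy
      obtain ⟨hqF, -⟩ := Finset.mem_filter.mp hq
      exact ⟨hFpdist2 q hqF, (hzspec q (hB2dist q hq)).2.symm, hzq3 q hq⟩
  -- Sv is contained in the v-budget
  have hSvD : (↑Sv : Set (V × V)) ⊆
      {zy : V × V | G.dist v zy.1 = 2 ∧ G.Adj zy.1 zy.2 ∧ G.dist v zy.2 = 3} := by
    intro zy hzy
    rw [hSv] at hzy
    simp only [Finset.coe_insert, Set.mem_insert_iff, Finset.coe_union, Set.mem_union,
      Finset.mem_coe] at hzy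
    rcases hzy with rfl | rfl | hzy | hzy
    · exact ⟨hdist_vp, hup.symm, by rw [SimpleGraph.dist_comm]; exact hdist⟩
    · exact hxeD
    · rw [hSvX] at hzy
      obtain ⟨t, ht, rfl⟩ := Finset.mem_image.mp hzy
      obtain ⟨htF, -⟩ := Finset.mem_filter.mp ht
      exact ⟨hFv'dv t htF, (hyspec t (hA2dist t ht)).2.symm, hyt3 t ht⟩
    · rw [hSvY] at hzy
      obtain ⟨q, hq, rfl⟩ := Finset.mem_image.mp hzy
      obtain ⟨hqF, hq3⟩ := Finset.mem_filter.mp hq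
      exact ⟨hdist_vp, ((hmemFp q).mp hqF).1, hq3⟩
  -- cardinality of Su
  have hSucard : Su.card = A1.card + B2.card + 2 := by
    have hXY : Disjoint SuX SuY := by
      rw [Finset.disjoint_left]
      rintro zy hzyX hzyY
      rw [hSuX] at hzyX
      rw [hSuY] at hzyY
      obtain ⟨t, ht, rfl⟩ := Finset.mem_image.mp hzyX
      obtain ⟨q, hq, hqe⟩ := Finset.mem_image.mp hzyY
      obtain ⟨hqF, -⟩ := Finset.mem_filter.mp hq
      have : q = v' := (Prod.mk.injEq .. ▸ hqe.symm).1.symm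
      exact ((hmemFp q).mp hqF).2.2 this
    have hxwmem : (x, w) ∉ SuX ∪ SuY := by
      rw [Finset.mem_union, hSuX, hSuY]
      rintro (h | h)
      · obtain ⟨t, -, hte⟩ := Finset.mem_image.mp h
        exact hxne ((Prod.mk.injEq .. ▸ hte).1).symm
      · obtain ⟨q, hq, hqe⟩ := Finset.mem_image.mp h
        obtain ⟨rfl, hzw⟩ : q = x ∧ zfun q = w := Prod.mk.injEq .. ▸ hqe
        have := (hzspec q (hB2dist q hq)).1
        rw [hzw] at this
        exact hnadj_vw this
    have hvvmem : (v', v) ∉ insert (x, w) (SuX ∪ SuY) := by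
      rw [Finset.mem_insert, Finset.mem_union, hSuX, hSuY]
      rintro (h | h | h)
      · exact hxne ((Prod.mk.injEq .. ▸ h).1).symm
      · obtain ⟨t, ht, hte⟩ := Finset.mem_image.mp h
        obtain ⟨-, rfl⟩ : v' = v' ∧ t = v := Prod.mk.injEq .. ▸ hte
        obtain ⟨-, htv, -⟩ := (hmemFv' t).mp (Finset.mem_filter.mp ht).1
        exact htv rfl
      · obtain ⟨q, hq, hqe⟩ := Finset.mem_image.mp h
        obtain ⟨rfl, -⟩ : q = v' ∧ zfun q = v := Prod.mk.injEq .. ▸ hqe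
        exact ((hmemFp q).mp (Finset.mem_filter.mp hq).1).2.2 rfl
    rw [hSu, Finset.card_insert_of_notMem hvvmem, Finset.card_insert_of_notMem hxwmem,
      Finset.card_union_of_disjoint hXY, hSuX, hSuY,
      Finset.card_image_of_injective _ (fun t t' h => (Prod.mk.injEq .. ▸ h).2),
      Finset.card_image_of_injective _ (fun q q' h => (Prod.mk.injEq .. ▸ h).1)]
  -- cardinality of Sv
  have hSvcard : Sv.card = A2.card + B1.card + 2 := by
    have hXY : Disjoint SvX SvY := by
      rw [Finset.disjoint_left]
      rintro zy hzyX hzyY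
      rw [hSvX] at hzyX
      rw [hSvY] at hzyY
      obtain ⟨t, ht, rfl⟩ := Finset.mem_image.mp hzyX
      obtain ⟨q, hq, hqe⟩ := Finset.mem_image.mp hzyY
      have : p = t := (Prod.mk.injEq .. ▸ hqe).1
      obtain ⟨-, -, htp⟩ := (hmemFv' t).mp (Finset.mem_filter.mp ht).1
      exact htp this.symm
    have hxemem : xe ∉ SvX ∪ SvY := by
      rw [Finset.mem_union, hSvX, hSvY]
      rintro (h | h)
      · obtain ⟨t, ht, hte⟩ := Finset.mem_image.mp h
        apply hxe1A2
        rw [← hte]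
        exact ht
      · obtain ⟨q, hq, hqe⟩ := Finset.mem_image.mp h
        apply hxe1p
        rw [← hqe]
    have hpumem : (p, u) ∉ insert xe (SvX ∪ SvY) := by
      rw [Finset.mem_insert, Finset.mem_union, hSvX, hSvY]
      rintro (h | h | h)
      · exact hxe1p (by rw [← h])
      · obtain ⟨t, ht, hte⟩ := Finset.mem_image.mp h
        obtain ⟨rfl, -⟩ : t = p ∧ yfun t = u := Prod.mk.injEq .. ▸ hte
        obtain ⟨-, -, htp⟩ := (hmemFv' t).mp (Finset.mem_filter.mp ht).1
        exact htp rfl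
      · obtain ⟨q, hq, hqe⟩ := Finset.mem_image.mp h
        obtain ⟨-, rfl⟩ : p = p ∧ q = u := Prod.mk.injEq .. ▸ hqe
        exact ((hmemFp q).mp (Finset.mem_filter.mp hq).1).2.1 rfl
    rw [hSv, Finset.card_insert_of_notMem hpumem, Finset.card_insert_of_notMem hxemem,
      Finset.card_union_of_disjoint hXY, hSvX, hSvY,
      Finset.card_image_of_injective _ (fun t t' h => (Prod.mk.injEq .. ▸ h).1),
      Finset.card_image_of_injective _ (fun q q' h => (Prod.mk.injEq .. ▸ h).2)]
  -- conclude
  have hSule : Su.card ≤ 2 * ε := by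
    rw [← Set.ncard_coe_finset]
    exact le_trans (Set.ncard_le_ncard hSuD (Set.toFinite _)) hbud_u
  have hSvle : Sv.card ≤ 2 * ε := by
    rw [← Set.ncard_coe_finset]
    exact le_trans (Set.ncard_le_ncard hSvD (Set.toFinite _)) hbud_v
  omega
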